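/- (Herbst argument) Let (Ω, μ) be a probability space, f : Ω → ℝ bounded and measurable, and D > 0. Suppose that for every λ > 0, Ent_μ(exp ∘ (λf)) ≤ (1/2)·λ²·D·∫ exp(λ f) dμ. Then for every λ > 0, ∫ exp(λ(f(x) − 𝔼_μ(f))) dμ(x) ≤ exp((1/2)λ²D). -/

import Mathlib

open MeasureTheory Real Filter Set Topology

/-- The Herbst argument. -/
theorem herbst_argument {Ω : Type*} [MeasurableSpace Ω] (μ : Measure Ω)
    [IsProbabilityMeasure μ] (f : Ω → ℝ) (hfm : Measurable f)
    (C : ℝ) (hfb : ∀ x, |f x| ≤ C) (D : ℝ) (hD : 0 < D)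
    (hEnt : ∀ l : ℝ, 0 < l →
      (∫ x, Real.exp (l * f x) * Real.log (Real.exp (l * f x)) ∂μ)
          - (∫ x, Real.exp (l * f x) ∂μ) * Real.log (∫ x, Real.exp (l * f x) ∂μ)
        ≤ (1 / 2) * l ^ 2 * D * ∫ x, Real.exp (l * f x) ∂μ) :
    ∀ l : ℝ, 0 < l →
      (∫ x, Real.exp (l * (f x - ∫ y, f y ∂μ)) ∂μ) ≤ Real.exp ((1 / 2) * l ^ 2 * D) := by
  have hC : 0 ≤ C := by
    by_contra h
    push_neg at h
    have h1 : (Set.univ : Set Ω) = ∅ :=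
      Set.eq_empty_iff_forall_notMem.2 fun x _ => absurd (abs_nonneg (f x)) (by linarith [hfb x])
    have h2 := measure_univ (μ := μ)
    rw [h1, measure_empty] at h2
    exact zero_ne_one h2
  set m : ℝ := ∫ y, f y ∂μ with hm
  set I : ℝ → ℝ := fun l => ∫ x, Real.exp (l * f x) ∂μ with hI
  set J : ℝ → ℝ := fun l => ∫ x, f x * Real.exp (l * f x) ∂μ with hJ
  have hmeas : ∀ l : ℝ, Measurable fun x => Real.exp (l * f x) :=
    fun l => (hfm.const_mul l).exp
  have hbd : ∀ (l : ℝ) (x : Ω), l * f x ≤ |l| * C := by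
    intro l x
    calc l * f x ≤ |l * f x| := le_abs_self _
      _ = |l| * |f x| := abs_mul _ _
      _ ≤ |l| * C := mul_le_mul_of_nonneg_left (hfb x) (abs_nonneg l)
  have hint : ∀ l : ℝ, Integrable (fun x => Real.exp (l * f x)) μ := by
    intro l
    refine ⟨(hmeas l).aestronglyMeasurable, ?_⟩
    apply HasFiniteIntegral.of_bounded (C := Real.exp (|l| * C))
    filter_upwards with x
    rw [Real.norm_eq_abs, abs_of_pos (Real.exp_pos _)]
    exact Real.exp_le_exp.2 (hbd l x)
  have hintf : ∀ l : ℝ, Integrable (fun x => f x * Real.exp (l * f x)) μ := by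
    intro l
    refine ⟨(hfm.mul (hmeas l)).aestronglyMeasurable, ?_⟩
    apply HasFiniteIntegral.of_bounded (C := C * Real.exp (|l| * C))
    filter_upwards with x
    rw [Real.norm_eq_abs, abs_mul, abs_of_pos (Real.exp_pos _)]
    exact mul_le_mul (hfb x) (Real.exp_le_exp.2 (hbd l x)) (Real.exp_pos _).le hC
  have hIpos : ∀ l, 0 < I l := by
    intro l
    have h1 : ∀ x, Real.exp (-(|l| * C)) ≤ Real.exp (l * f x) := by
      intro x
      apply Real.exp_le_exp.2
      have := hbd l x
      have h2 := hbd (-l) x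
      simp only [neg_mul, abs_neg] at h2
      linarith
    have h3 := integral_mono (integrable_const (Real.exp (-(|l| * C)))) (hint l) h1
    rw [integral_const] at h3
    simp only [probReal_univ, smul_eq_mul, one_mul] at h3
    exact lt_of_lt_of_le (Real.exp_pos _) h3
  have hderivI : ∀ l₀ : ℝ, HasDerivAt I (J l₀) l₀ := by
    intro l₀
    have key := hasDerivAt_integral_of_dominated_loc_of_deriv_le
      (F := fun l x => Real.exp (l * f x))
      (F' := fun l x => f x * Real.exp (l * f x)) (x₀ := l₀)
      (bound := fun _ => C * Real.exp ((|l₀| + 1) * C)) (s := Metric.ball l₀ 1) (Metric.ball_mem_nhds l₀ one_pos)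
      (Eventually.of_forall fun l => (hmeas l).aestronglyMeasurable)
      (hint l₀) ((hfm.mul (hmeas l₀)).aestronglyMeasurable) ?_ (integrable_const _) ?_
    · exact key.2
    · filter_upwards with x l hl
      rw [Real.norm_eq_abs, abs_mul, abs_of_pos (Real.exp_pos _)]
      refine mul_le_mul (hfb x) (Real.exp_le_exp.2 ?_) (Real.exp_pos _).le hC
      have hl' : |l| ≤ |l₀| + 1 := by
        have h1 : |l - l₀| < 1 := by simpa [Real.dist_eq] using Metric.mem_ball.1 hl
        calc |l| = |l₀ + (l - l₀)| := by ring_nf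
          _ ≤ |l₀| + |l - l₀| := abs_add_le _ _
          _ ≤ |l₀| + 1 := by linarith
      calc l * f x ≤ |l| * C := hbd l x
        _ ≤ (|l₀| + 1) * C := mul_le_mul_of_nonneg_right hl' hC
    · filter_upwards with x l hl
      have h1 : HasDerivAt (fun l : ℝ => l * f x) (f x) l := by
        simpa using (hasDerivAt_id l).mul_const (f x)
      simpa [mul_comm] using h1.exp
  set Λ : ℝ → ℝ := fun l => Real.log (I l) with hΛ
  have hderivΛ : ∀ l : ℝ, HasDerivAt Λ (J l / I l) l :=
    fun l => (hderivI l).log (hIpos l).ne'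
  have hI0 : I 0 = 1 := by
    simp [hI]
  have hJ0 : J 0 = m := by
    simp [hJ, hm]
  have hΛ0 : Λ 0 = 0 := by
    simp [hΛ, hI0]
  have hEnt' : ∀ l : ℝ, 0 < l → l * J l - I l * Λ l ≤ (1 / 2) * l ^ 2 * D * I l := by
    intro l hl
    have h0 := hEnt l hl
    have h1 : (∫ x, Real.exp (l * f x) * Real.log (Real.exp (l * f x)) ∂μ) = l * J l := by
      rw [hJ, ← integral_const_mul]
      congr 1
      ext x
      rw [Real.log_exp]
      ring
    rw [h1] at h0
    exact h0
  set φ : ℝ → ℝ := fun l => if l = 0 then m else Λ l / l with hφ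
  have hφderiv : ∀ l : ℝ, 0 < l → HasDerivAt φ ((J l / I l * l - Λ l) / l ^ 2) l := by
    intro l hl
    have h1 : HasDerivAt (fun t => Λ t / t) ((J l / I l * l - Λ l * 1) / l ^ 2) l :=
      (hderivΛ l).div (hasDerivAt_id l) hl.ne'
    rw [mul_one] at h1
    apply h1.congr_of_eventuallyEq
    filter_upwards [eventually_ne_nhds hl.ne'] with t ht
    simp [hφ, ht]
  -- the key derivative bound
  have hslope_le : ∀ l : ℝ, 0 < l → (J l / I l * l - Λ l) / l ^ 2 ≤ D / 2 := by
    intro l hl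
    have h1 : J l / I l * l - Λ l = (l * J l - I l * Λ l) / I l := by
      field_simp [(hIpos l).ne']
    rw [h1]
    have h2 : (l * J l - I l * Λ l) / I l ≤ (1 / 2) * l ^ 2 * D := by
      rw [div_le_iff₀ (hIpos l)]
      exact hEnt' l hl
    rw [div_le_iff₀ (pow_pos hl 2)]
    calc (l * J l - I l * Λ l) / I l ≤ (1 / 2) * l ^ 2 * D := h2
      _ = D / 2 * l ^ 2 := by ring
  intro L hL
  -- monotonicity of g on [0, L]
  set g : ℝ → ℝ := fun l => D / 2 * l - φ l with hg
  have hgderiv : ∀ t : ℝ, 0 < t →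
      HasDerivAt g (D / 2 - (J t / I t * t - Λ t) / t ^ 2) t := by
    intro t ht
    have h1 : HasDerivAt (fun l : ℝ => D / 2 * l) (D / 2) t := by
      simpa using (hasDerivAt_id t).const_mul (D / 2)
    exact h1.sub (hφderiv t ht)
  have hφcont0 : ContinuousWithinAt φ (Icc 0 L) 0 := by
    rw [← continuousWithinAt_diff_self]
    have hslope : Tendsto (slope Λ 0) (𝓝[≠] 0) (𝓝 (J 0 / I 0)) :=
      hasDerivAt_iff_tendsto_slope.1 (hderivΛ 0)
    rw [hJ0, hI0, div_one] at hslope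
    have hle : 𝓝[Icc 0 L \ {0}] (0 : ℝ) ≤ 𝓝[≠] (0 : ℝ) :=
      nhdsWithin_mono 0 (fun x hx => hx.2)
    have h2 : Tendsto (slope Λ 0) (𝓝[Icc 0 L \ {0}] 0) (𝓝 m) := hslope.mono_left hle
    have hφ0 : φ 0 = m := by simp [hφ]
    unfold ContinuousWithinAt
    rw [hφ0]
    apply h2.congr'
    filter_upwards [self_mem_nhdsWithin] with t ht
    have ht0 : t ≠ 0 := ht.2
    rw [slope_def_field]
    simp [hφ, ht0, hΛ0]
  have hgcont : ContinuousOn g (Icc 0 L) := by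
    intro t ht
    rcases eq_or_ne t 0 with rfl | ht0
    · exact ((continuous_const.mul continuous_id).continuousWithinAt).sub hφcont0
    · have htpos : 0 < t := lt_of_le_of_ne ht.1 (Ne.symm ht0)
      exact ((hgderiv t htpos).differentiableAt.continuousAt).continuousWithinAt
  have hgmono : MonotoneOn g (Icc 0 L) := by
    apply monotoneOn_of_deriv_nonneg (convex_Icc 0 L) hgcont
    · rw [interior_Icc]
      intro t ht
      exact ((hgderiv t ht.1).differentiableAt).differentiableWithinAt
    · rw [interior_Icc]
      intro t ht
      rw [(hgderiv t ht.1).deriv]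
      linarith [hslope_le t ht.1]
  have hkey := hgmono (left_mem_Icc.2 hL.le) (right_mem_Icc.2 hL.le) hL.le
  have hg0 : g 0 = -m := by simp [hg, hφ]
  have hgL : g L = D / 2 * L - Λ L / L := by simp [hg, hφ, hL.ne']
  rw [hg0, hgL] at hkey
  have hΛL : Λ L ≤ L * m + D / 2 * L ^ 2 := by
    have h1 : Λ L / L ≤ m + D / 2 * L := by linarith
    have h2 := mul_le_mul_of_nonneg_left h1 hL.le
    rw [mul_div_cancel₀ _ hL.ne'] at h2
    linarith [h2]
  have hrw : (fun x => Real.exp (L * (f x - m)))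
      = fun x => Real.exp (-(L * m)) * Real.exp (L * f x) := by
    ext x
    rw [← Real.exp_add]
    ring_nf
  rw [hrw, integral_const_mul]
  have hIL : I L = Real.exp (Λ L) := (Real.exp_log (hIpos L)).symm
  rw [show (∫ x, Real.exp (L * f x) ∂μ) = I L from rfl, hIL, ← Real.exp_add]
  apply Real.exp_le_exp.2
  nlinarith [hΛL]
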